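/- For every H ∈ (0,1/2) and all 0 < s < t, the Volterra kernel satisfies the lower bound K_H(t,s) ≥ c_H (t−s)^{H−1/2}. -/
import Mathlib


open Real MeasureTheory

noncomputable section

/-- The Beta function `B(a,b) = ∫_0^1 r^{a−1}(1−r)^{b−1} dr`. -/
def betaFn (a b : ℝ) : ℝ :=
  ∫ r in (0:ℝ)..1, r ^ (a - 1) * (1 - r) ^ (b - 1)

/-- The normalizing constant `c_H = (2H/((1−2H)·B(1−2H, H+1/2)))^{1/2}`. -/
def cH (H : ℝ) : ℝ :=
  Real.sqrt (2 * H / ((1 - 2 * H) * betaFn (1 - 2 * H) (H + 1/2)))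

/-- The Volterra kernel
`K_H(t,s) = c_H ((t/s)^{H−1/2}(t−s)^{H−1/2} + (1/2−H) s^{1/2−H} ∫_s^t r^{H−3/2}(r−s)^{H−1/2} dr)`. -/
def KH (H t s : ℝ) : ℝ :=
  cH H * ((t / s) ^ (H - 1/2) * (t - s) ^ (H - 1/2) +
    (1/2 - H) * s ^ (1/2 - H) * ∫ r in s..t, r ^ (H - 3/2) * (r - s) ^ (H - 1/2))

/-- The kernel `K̃_H(t,s) = t^{H−1/2} (t−s)^{−1/2−H} s^{1/2−H}`. -/
def KtH (H t s : ℝ) : ℝ :=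
  t ^ (H - 1/2) * (t - s) ^ (-(1/2) - H) * s ^ (1/2 - H)

/-- Lower bound for the Volterra kernel: for `H ∈ (0,1/2)` and `0 < s < t`,
`K_H(t,s) ≥ c_H (t−s)^{H−1/2}`. -/
theorem KH_lower_bound
    (H : ℝ) (hH0 : 0 < H) (hH1 : H < 1/2) (s t : ℝ) (hs : 0 < s) (hst : s < t) :
    cH H * (t - s) ^ (H - 1/2) ≤ KH H t s := by
  have ht : 0 < t := hs.trans hst
  have hts : 0 < t - s := sub_pos.mpr hst
  have hα : H - 1/2 < 0 := by linarith
  have h0uIcc : (0:ℝ) ∉ Set.uIcc s t := Set.notMem_uIcc_of_lt hs ht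
  -- integrability of the base function (r-s)^(H-1/2)
  have hbase : IntervalIntegrable (fun x => (x - s) ^ (H - 1/2)) volume s t := by
    have h := (intervalIntegral.intervalIntegrable_rpow' (a := 0) (b := t - s) (r := H - 1/2)
      (by linarith)).comp_sub_right s
    simpa using h
  -- integrability of f r = r^(H-3/2) (r-s)^(H-1/2)
  have hfmeas : AEStronglyMeasurable (fun r : ℝ => r ^ (H - 3/2) * (r - s) ^ (H - 1/2))
      (volume.restrict (Set.uIoc s t)) := by
    apply ContinuousOn.aestronglyMeasurable _ measurableSet_uIoc
    rw [Set.uIoc_of_le hst.le]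
    apply ContinuousOn.mul
    · exact continuousOn_id.rpow_const fun x hx => Or.inl (ne_of_gt (hs.trans hx.1))
    · exact (continuousOn_id.sub continuousOn_const).rpow_const
        fun x hx => Or.inl (ne_of_gt (sub_pos.mpr hx.1))
  have hf : IntervalIntegrable (fun r : ℝ => r ^ (H - 3/2) * (r - s) ^ (H - 1/2))
      volume s t := by
    apply (hbase.const_mul (s ^ (H - 3/2))).mono_fun' hfmeas
    rw [Set.uIoc_of_le hst.le]
    filter_upwards [ae_restrict_mem measurableSet_Ioc] with x hx
    have hx0 : 0 < x := hs.trans hx.1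
    have h1 : x ^ (H - 3/2) ≤ s ^ (H - 3/2) :=
      Real.rpow_le_rpow_of_nonpos hs hx.1.le (by linarith)
    have h2 : (0:ℝ) ≤ (x - s) ^ (H - 1/2) := Real.rpow_nonneg (by linarith [hx.1]) _
    have h3 : (0:ℝ) ≤ x ^ (H - 3/2) := Real.rpow_nonneg hx0.le _
    simp only [norm_mul, Real.norm_eq_abs, abs_of_nonneg h2, abs_of_nonneg h3]
    exact mul_le_mul_of_nonneg_right h1 h2
  -- integrability of g r = r^(H-3/2) (t-s)^(H-1/2)
  have hg : IntervalIntegrable (fun r : ℝ => r ^ (H - 3/2) * (t - s) ^ (H - 1/2))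
      volume s t :=
    (intervalIntegral.intervalIntegrable_rpow (r := H - 3/2) (Or.inr h0uIcc)).mul_const _
  -- pointwise comparison a.e. on Icc
  have hae : (fun r : ℝ => r ^ (H - 3/2) * (t - s) ^ (H - 1/2))
      ≤ᵐ[volume.restrict (Set.Icc s t)] fun r => r ^ (H - 3/2) * (r - s) ^ (H - 1/2) := by
    have hne : ∀ᵐ x : ℝ ∂(volume.restrict (Set.Icc s t)), x ≠ s := by
      refine (ae_restrict_iff' measurableSet_Icc).2 ?_
      have : ∀ᵐ x : ℝ, x ≠ s := compl_mem_ae_iff.mpr (measure_singleton s)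
      filter_upwards [this] with x hx _ using hx
    filter_upwards [ae_restrict_mem measurableSet_Icc, hne] with x hx hxne
    have hxs : s < x := lt_of_le_of_ne hx.1 (Ne.symm hxne)
    have h1 : (t - s) ^ (H - 1/2) ≤ (x - s) ^ (H - 1/2) :=
      Real.rpow_le_rpow_of_nonpos (sub_pos.mpr hxs) (by linarith [hx.2]) hα.le
    exact mul_le_mul_of_nonneg_left h1 (Real.rpow_nonneg (hs.trans hxs).le _)
  have hIle : (∫ r in s..t, r ^ (H - 3/2) * (t - s) ^ (H - 1/2))
      ≤ ∫ r in s..t, r ^ (H - 3/2) * (r - s) ^ (H - 1/2) :=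
    intervalIntegral.integral_mono_ae_restrict hst.le hg hf hae
  -- compute the lower integral
  have hval : (∫ r in s..t, r ^ (H - 3/2) * (t - s) ^ (H - 1/2))
      = (t ^ (H - 1/2) - s ^ (H - 1/2)) / (H - 1/2) * (t - s) ^ (H - 1/2) := by
    rw [intervalIntegral.integral_mul_const,
      integral_rpow (Or.inr ⟨by intro h; rw [show (-1:ℝ) = -1 from rfl] at h; linarith [h], h0uIcc⟩)]
    rw [show H - 3/2 + 1 = H - 1/2 by ring]
  -- now the algebra
  have hcH : 0 ≤ cH H := Real.sqrt_nonneg _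
  unfold KH
  apply mul_le_mul_of_nonneg_left _ hcH
  have hA : (1/2 - H) * s ^ (1/2 - H) *
      ((t ^ (H - 1/2) - s ^ (H - 1/2)) / (H - 1/2) * (t - s) ^ (H - 1/2))
      ≤ (1/2 - H) * s ^ (1/2 - H) * ∫ r in s..t, r ^ (H - 3/2) * (r - s) ^ (H - 1/2) := by
    apply mul_le_mul_of_nonneg_left (hval ▸ hIle)
    exact mul_nonneg (by linarith) (Real.rpow_nonneg hs.le _)
  have hdiv : (t / s) ^ (H - 1/2) = t ^ (H - 1/2) / s ^ (H - 1/2) :=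
    Real.div_rpow ht.le hs.le _
  have hsinv : s ^ (1/2 - H) = (s ^ (H - 1/2))⁻¹ := by
    rw [← Real.rpow_neg hs.le]; norm_num
  have hspow : (0:ℝ) < s ^ (H - 1/2) := Real.rpow_pos_of_pos hs _
  have hne2 : H - 1/2 ≠ 0 := ne_of_lt hα
  have h6 : (1/2 - H) * ((t ^ (H - 1/2) - s ^ (H - 1/2)) / (H - 1/2))
      = s ^ (H - 1/2) - t ^ (H - 1/2) := by
    rw [mul_div_assoc', div_eq_iff hne2]
    ring
  have hEq : (t - s) ^ (H - 1/2)
      = (t / s) ^ (H - 1/2) * (t - s) ^ (H - 1/2) + (1/2 - H) * s ^ (1/2 - H) *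
        ((t ^ (H - 1/2) - s ^ (H - 1/2)) / (H - 1/2) * (t - s) ^ (H - 1/2)) := by
    rw [hdiv, hsinv]
    calc (t - s) ^ (H - 1/2)
        = s ^ (H - 1/2) * (s ^ (H - 1/2))⁻¹ * (t - s) ^ (H - 1/2) := by
          rw [mul_inv_cancel₀ (ne_of_gt hspow), one_mul]
      _ = t ^ (H - 1/2) * (s ^ (H - 1/2))⁻¹ * (t - s) ^ (H - 1/2) +
          (s ^ (H - 1/2) - t ^ (H - 1/2)) * (s ^ (H - 1/2))⁻¹ * (t - s) ^ (H - 1/2) := by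
          ring
      _ = t ^ (H - 1/2) * (s ^ (H - 1/2))⁻¹ * (t - s) ^ (H - 1/2) +
          ((1/2 - H) * ((t ^ (H - 1/2) - s ^ (H - 1/2)) / (H - 1/2))) * (s ^ (H - 1/2))⁻¹ *
            (t - s) ^ (H - 1/2) := by rw [h6]
      _ = t ^ (H - 1/2) / s ^ (H - 1/2) * (t - s) ^ (H - 1/2) + (1/2 - H) * (s ^ (H - 1/2))⁻¹ *
          ((t ^ (H - 1/2) - s ^ (H - 1/2)) / (H - 1/2) * (t - s) ^ (H - 1/2)) := by
          ring
  linarith [hA]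

end
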